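/- Let 0 < s_1 < s_2 < ... < s_K and let P = {(σ(θ_0+θ_1 s_1), ..., σ(θ_0+θ_1 s_K)) : (θ_0,θ_1) ∈ ℝ^2} ⊂ [0,1]^K, where σ is the logistic function. Then the closed convex hull of P equals the closed convex hull of the set M of vectors (ν_1,...,ν_K) ∈ {0,1}^K whose coordinates are either nondecreasing or nonincreasing. -/

import Mathlib

noncomputable def logistic (x : ℝ) : ℝ := Real.exp x / (1 + Real.exp x)

lemma logistic_nonneg (x : ℝ) : 0 ≤ logistic x :=
  div_nonneg (Real.exp_pos x).le (by positivity)

lemma logistic_le_one (x : ℝ) : logistic x ≤ 1 := by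
  rw [logistic, div_le_one (by positivity)]; linarith

lemma logistic_mono : Monotone logistic := by
  intro x y hxy
  have hx := Real.exp_pos x
  have hy := Real.exp_pos y
  rw [logistic, logistic, div_le_div_iff₀ (by linarith) (by linarith)]
  have := Real.exp_le_exp.2 hxy
  nlinarith

lemma tendsto_logistic_atTop : Filter.Tendsto logistic Filter.atTop (nhds 1) := by
  have h : logistic = fun x => 1 - 1 / (1 + Real.exp x) := by
    funext x
    have : (0:ℝ) < 1 + Real.exp x := by positivity
    rw [logistic, eq_sub_iff_add_eq, ← add_div, div_eq_one_iff_eq this.ne']; ring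
  rw [h]
  have : Filter.Tendsto (fun x : ℝ => 1 / (1 + Real.exp x)) Filter.atTop (nhds 0) :=
    Filter.Tendsto.div_atTop tendsto_const_nhds
      (Filter.tendsto_atTop_add_const_left _ _ Real.tendsto_exp_atTop)
  simpa using (tendsto_const_nhds (x := (1:ℝ))).sub this

lemma tendsto_logistic_atBot : Filter.Tendsto logistic Filter.atBot (nhds 0) := by
  have h0 : Filter.Tendsto Real.exp Filter.atBot (nhds 0) := Real.tendsto_exp_atBot
  have := (h0.div ((tendsto_const_nhds (x := (1:ℝ))).add h0) (by norm_num))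
  rw [show (0:ℝ) = 0 / (1 + 0) by norm_num]
  exact this

lemma mono01_mem_convexHull {K : ℕ} (v : Fin K → ℝ) (hv : Monotone v)
    (h0 : ∀ i, 0 ≤ v i) (h1 : ∀ i, v i ≤ 1) :
    v ∈ convexHull ℝ {ν : Fin K → ℝ | (∀ i, ν i = 0 ∨ ν i = 1) ∧ Monotone ν} := by
  classical
  set v' : ℕ → ℝ := fun j => if h : j < K then v ⟨j, h⟩ else 1 with hv'
  have hv'mono : ∀ {a b : ℕ}, a ≤ b → v' a ≤ v' b := by
    intro a b hab
    by_cases hb : b < K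
    · have ha : a < K := lt_of_le_of_lt hab hb
      simp only [hv', dif_pos ha, dif_pos hb]
      exact hv (by exact hab)
    · by_cases ha : a < K
      · simp only [hv', dif_pos ha, dif_neg hb]; exact h1 _
      · simp [hv', dif_neg ha, dif_neg hb]
  have hv'nonneg : ∀ j, 0 ≤ v' j := by
    intro j; by_cases h : j < K
    · simp only [hv', dif_pos h]; exact h0 _
    · simp [hv', dif_neg h]
  set u : ℕ → ℝ := fun j => if j = 0 then 0 else v' (j - 1) with hu
  set w : ℕ → ℝ := fun j => u (j + 1) - u j with hw
  set z : ℕ → (Fin K → ℝ) := fun j => fun i => if j ≤ i.val then 1 else 0 with hz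
  have hw0 : ∀ j ∈ Finset.range (K + 1), 0 ≤ w j := by
    intro j _
    simp only [hw, hu]
    rcases Nat.eq_zero_or_pos j with rfl | hj
    · simpa using hv'nonneg 0
    · rw [if_neg (by omega), if_neg (by omega)]
      simpa using hv'mono (by omega : j - 1 ≤ j + 1 - 1)
  have hwsum : ∑ j ∈ Finset.range (K + 1), w j = 1 := by
    rw [hw, Finset.sum_range_sub]
    simp [hu, hv', lt_irrefl]
  have hzmem : ∀ j ∈ Finset.range (K + 1),
      z j ∈ {ν : Fin K → ℝ | (∀ i, ν i = 0 ∨ ν i = 1) ∧ Monotone ν} := by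
    intro j _
    constructor
    · intro i; by_cases h : j ≤ i.val <;> simp [hz, h]
    · intro a b hab
      simp only [hz]
      by_cases h : j ≤ a.val
      · rw [if_pos h, if_pos (le_trans h hab)]
      · rw [if_neg h]; split <;> norm_num
  have key : (Finset.range (K + 1)).centerMass w z = v := by
    rw [Finset.centerMass_eq_of_sum_1 _ _ hwsum]
    funext i
    have hsum : (∑ j ∈ Finset.range (K + 1), w j • z j) i
        = ∑ j ∈ Finset.range (K + 1), w j * z j i := by
      simp [Finset.sum_apply]
    rw [hsum]
    have : ∀ j ∈ Finset.range (K + 1), w j * z j i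
        = if j ∈ Finset.range (i.val + 1) then w j else 0 := by
      intro j _
      simp only [hz, Finset.mem_range, Nat.lt_succ_iff]
      by_cases h : j ≤ i.val <;> simp [h]
    rw [Finset.sum_congr rfl this, Finset.sum_ite_mem,
      Finset.inter_eq_right.2 (by intro x hx; simp only [Finset.mem_range] at *; omega),
      hw, Finset.sum_range_sub]
    simp only [hu, if_neg (Nat.succ_ne_zero _), if_pos rfl, Nat.add_sub_cancel, hv',
      dif_pos i.isLt, sub_zero]
  rw [← key]
  exact Finset.centerMass_mem_convexHull _ hw0 (by rw [hwsum]; norm_num) hzmem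

lemma revAntitone {K : ℕ} : Antitone (Fin.rev : Fin K → Fin K) :=
  fun _ _ h => Fin.rev_le_rev.2 h

lemma mem_convexHull_M {K : ℕ} (v : Fin K → ℝ) (hv : Monotone v ∨ Antitone v)
    (h0 : ∀ i, 0 ≤ v i) (h1 : ∀ i, v i ≤ 1) :
    v ∈ convexHull ℝ {ν : Fin K → ℝ | (∀ i, ν i = 0 ∨ ν i = 1) ∧ (Monotone ν ∨ Antitone ν)} := by
  rcases hv with hv | hv
  · exact convexHull_mono (fun ν hν => show _ ∧ _ from ⟨hν.1, Or.inl hν.2⟩)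
      (mono01_mem_convexHull v hv h0 h1)
  · set f : (Fin K → ℝ) →ₗ[ℝ] (Fin K → ℝ) := LinearMap.funLeft ℝ ℝ Fin.rev with hf
    have hvr : Monotone (v ∘ Fin.rev) := hv.comp revAntitone
    have h2 : v ∘ Fin.rev ∈ convexHull ℝ
        {ν : Fin K → ℝ | (∀ i, ν i = 0 ∨ ν i = 1) ∧ Monotone ν} :=
      mono01_mem_convexHull _ hvr (fun i => h0 _) (fun i => h1 _)
    have h3 : f (v ∘ Fin.rev) ∈ f '' (convexHull ℝ
        {ν : Fin K → ℝ | (∀ i, ν i = 0 ∨ ν i = 1) ∧ Monotone ν}) :=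
      Set.mem_image_of_mem _ h2
    rw [f.image_convexHull] at h3
    have hfv : f (v ∘ Fin.rev) = v := by
      funext i; simp [hf, LinearMap.funLeft, Function.comp, Fin.rev_rev]
    rw [hfv] at h3
    refine convexHull_mono ?_ h3
    rintro μ ⟨ν, ⟨hν01, hνmono⟩, rfl⟩
    refine ⟨fun i => hν01 _, Or.inr ?_⟩
    have : f ν = ν ∘ Fin.rev := rfl
    rw [this]
    exact hνmono.comp_antitone revAntitone

lemma sep_exists {K : ℕ} (s : Fin K → ℝ) (hs : StrictMono s) (ν : Fin K → ℝ)
    (h01 : ∀ i, ν i = 0 ∨ ν i = 1) (hmono : Monotone ν) :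
    ∃ a b : ℝ, ∀ i, (0 < a + b * s i ∧ ν i = 1) ∨ (a + b * s i < 0 ∧ ν i = 0) := by
  classical
  by_cases hall0 : ∀ i, ν i = 0
  · exact ⟨-1, 0, fun i => Or.inr ⟨by norm_num, hall0 i⟩⟩
  by_cases hall1 : ∀ i, ν i = 1
  · exact ⟨1, 0, fun i => Or.inl ⟨by norm_num, hall1 i⟩⟩
  push_neg at hall0
  obtain ⟨i1, hi1⟩ := hall0
  have hi1' : ν i1 = 1 := (h01 i1).resolve_left hi1
  set F := Finset.univ.filter (fun i : Fin K => ν i = 1) with hF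
  have hFne : F.Nonempty := ⟨i1, by simp [hF, hi1']⟩
  set j := F.min' hFne with hj
  have hj1 : ν j = 1 := by have := F.min'_mem hFne; simpa [hF] using this
  have hlt : ∀ i : Fin K, i < j → ν i = 0 := by
    intro i hij
    rcases h01 i with h | h
    · exact h
    · exact absurd (F.min'_le i (by simp [hF, h])) (not_le.2 hij)
  have hge : ∀ i : Fin K, j ≤ i → ν i = 1 := by
    intro i hij
    rcases h01 i with h | h
    · have := hmono hij; rw [hj1, h] at this; linarith
    · exact h
  have hj0 : 0 < j.val := by
    by_contra h
    push_neg at h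
    interval_cases hjv : j.val
    obtain ⟨i0, hi0⟩ := not_forall.1 hall1
    have hi0' : ν i0 = 0 := (h01 i0).resolve_right hi0
    have : ν i0 = 1 := hge i0 (by omega)
    linarith [this, hi0']
  set jm : Fin K := ⟨j.val - 1, by omega⟩ with hjm
  have hjmj : jm < j := by simp [hjm, Fin.lt_def]; omega
  set t := (s jm + s j) / 2 with ht
  have h1 : s jm < t := by have := hs hjmj; simp [ht]; linarith
  have h2 : t < s j := by have := hs hjmj; simp [ht]; linarith
  refine ⟨-t, 1, fun i => ?_⟩
  by_cases hij : j ≤ i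
  · refine Or.inl ⟨?_, hge i hij⟩
    have : s j ≤ s i := hs.monotone hij
    linarith
  · push_neg at hij
    refine Or.inr ⟨?_, hlt i hij⟩
    have hijm : i ≤ jm := by simp [hjm, Fin.le_def]; omega
    have : s i ≤ s jm := hs.monotone hijm
    linarith

lemma sep_exists' {K : ℕ} (s : Fin K → ℝ) (hs : StrictMono s) (ν : Fin K → ℝ)
    (h01 : ∀ i, ν i = 0 ∨ ν i = 1) (hmono : Monotone ν ∨ Antitone ν) :
    ∃ a b : ℝ, ∀ i, (0 < a + b * s i ∧ ν i = 1) ∨ (a + b * s i < 0 ∧ ν i = 0) := by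
  rcases hmono with hmono | hanti
  · exact sep_exists s hs ν h01 hmono
  · set s' : Fin K → ℝ := fun i => -(s i.rev) with hs'
    have hs'mono : StrictMono s' := by
      intro a b hab
      simp only [hs', neg_lt_neg_iff]
      exact hs (Fin.rev_lt_rev.2 hab)
    have hmono' : Monotone (ν ∘ Fin.rev) := hanti.comp revAntitone
    obtain ⟨a, b, hab⟩ := sep_exists s' hs'mono (ν ∘ Fin.rev)
      (fun i => h01 _) hmono'
    refine ⟨a, -b, fun i => ?_⟩
    have := hab i.rev
    simp only [hs', Fin.rev_rev, Function.comp_apply] at this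
    rcases this with ⟨h1, h2⟩ | ⟨h1, h2⟩
    · exact Or.inl ⟨by linarith, h2⟩
    · exact Or.inr ⟨by linarith, h2⟩

lemma mem_closure_P {K : ℕ} (s : Fin K → ℝ) (ν : Fin K → ℝ) (a b : ℝ)
    (hab : ∀ i, (0 < a + b * s i ∧ ν i = 1) ∨ (a + b * s i < 0 ∧ ν i = 0)) :
    ν ∈ closure (Set.range (fun θ : ℝ × ℝ => fun i => logistic (θ.1 + θ.2 * s i))) := by
  set x : ℕ → (Fin K → ℝ) := fun n => fun i => logistic ((n : ℝ) * a + ((n : ℝ) * b) * s i)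
    with hx
  have hmem : ∀ n, x n ∈ Set.range (fun θ : ℝ × ℝ => fun i => logistic (θ.1 + θ.2 * s i)) :=
    fun n => ⟨((n : ℝ) * a, (n : ℝ) * b), rfl⟩
  have htend : Filter.Tendsto x Filter.atTop (nhds ν) := by
    rw [tendsto_pi_nhds]
    intro i
    have harg : ∀ n : ℕ, (n : ℝ) * a + ((n : ℝ) * b) * s i = (n : ℝ) * (a + b * s i) := by
      intro n; ring
    simp only [hx, harg]
    rcases hab i with ⟨h1, h2⟩ | ⟨h1, h2⟩
    · rw [h2]
      exact tendsto_logistic_atTop.comp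
        ((tendsto_natCast_atTop_atTop (R := ℝ)).atTop_mul_const h1)
    · rw [h2]
      exact tendsto_logistic_atBot.comp
        ((tendsto_natCast_atTop_atTop (R := ℝ)).atTop_mul_const_of_neg h1)
  exact mem_closure_of_tendsto htend (Filter.Eventually.of_forall hmem)

/-- For `0 < s₁ < ⋯ < s_K`, the closed convex hull of the set of logistic probability
vectors `(σ(θ₀+θ₁s₁), …, σ(θ₀+θ₁s_K))` equals the closed convex hull of the set of
monotone (nondecreasing or nonincreasing) 0-1 vectors. -/
theorem closed_convex_hull_logistic_eq_monotone01
    {K : ℕ} (s : Fin K → ℝ) (hs : StrictMono s) (hspos : ∀ i, 0 < s i)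
    (P M : Set (Fin K → ℝ))
    (hP : P = Set.range (fun θ : ℝ × ℝ => fun i => logistic (θ.1 + θ.2 * s i)))
    (hM : M = {ν | (∀ i, ν i = 0 ∨ ν i = 1) ∧ (Monotone ν ∨ Antitone ν)}) :
    closure (convexHull ℝ P) = closure (convexHull ℝ M) := by
  apply le_antisymm
  · -- P ⊆ convexHull M
    have hPM : P ⊆ convexHull ℝ M := by
      rw [hP, hM]
      rintro p ⟨θ, rfl⟩
      refine mem_convexHull_M _ ?_ (fun i => logistic_nonneg _) (fun i => logistic_le_one _)
      rcases le_or_gt 0 θ.2 with h | h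
      · left
        intro i1 i2 h12
        exact logistic_mono (by nlinarith [hs.monotone h12])
      · right
        intro i1 i2 h12
        exact logistic_mono (by nlinarith [hs.monotone h12])
    have hclosed : IsClosed (closure (convexHull ℝ M)) := isClosed_closure
    have hconv : Convex ℝ (closure (convexHull ℝ M)) := (convex_convexHull ℝ M).closure
    exact closure_minimal
      (convexHull_min (hPM.trans subset_closure) hconv) hclosed
  · -- M ⊆ closure P
    have hMP : M ⊆ closure (convexHull ℝ P) := by
      rw [hM]
      rintro ν ⟨h01, hmono⟩
      obtain ⟨a, b, hab⟩ := sep_exists' s hs ν h01 hmono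
      have := mem_closure_P s ν a b hab
      rw [← hP] at this
      exact closure_mono (subset_convexHull ℝ P) this
    have hclosed : IsClosed (closure (convexHull ℝ P)) := isClosed_closure
    have hconv : Convex ℝ (closure (convexHull ℝ P)) := (convex_convexHull ℝ P).closure
    exact closure_minimal (convexHull_min hMP hconv) hclosed
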